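/- Let m_1, …, m_q be square-free monomials in k[x_1,…,x_n] ordered so that for each i ∈ {1,…,q} with i > 1 there exists a variable x with x ∤ m_i and x ∣ m_j for all j < i. If a = (a_1,…,a_q) and b = (b_1,…,b_q) are tuples of nonnegative integers with a_1 + ⋯ + a_q = b_1 + ⋯ + b_q = r > 0, then m_1^{a_1}⋯m_q^{a_q} = m_1^{b_1}⋯m_q^{b_q} implies a = b. -/

import Mathlib

open Finset

lemma mysplit {q : ℕ} (i : Fin q) (f : Fin q → ℕ) :
    ∑ j, f j = (∑ j ∈ Iio i, f j) + f i + ∑ j ∈ Ioi i, f j := by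
  have h1 : (univ : Finset (Fin q)) = (Iio i ∪ {i}) ∪ Ioi i := by
    ext j
    rcases lt_trichotomy j i with h | h | h <;> simp [h, le_or_gt]
  have d1 : Disjoint (Iio i) ({i} : Finset (Fin q)) := by
    simp only [Finset.disjoint_left, mem_Iio, mem_singleton]
    exact fun a h => ne_of_lt h
  have d2 : Disjoint (Iio i ∪ {i}) (Ioi i) := by
    simp only [Finset.disjoint_left, mem_union, mem_Iio, mem_singleton, mem_Ioi]
    intro j hj
    rcases hj with h | h
    · exact not_lt_of_ge (le_of_lt h)
    · exact not_lt_of_ge (le_of_eq h)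
  rw [h1, Finset.sum_union d2, Finset.sum_union d1, Finset.sum_singleton]

/-- monomials are identified with their exponent vectors
`Fin n → ℕ`; `m i` is the `i`-th square-free generator. Under the free-vertex
ordering condition, equal products `m^a = m^b` with `|a| = |b| = r > 0`
force `a = b`. -/
theorem stmt4 (n q r : ℕ) (hr : 0 < r) (m : Fin q → Fin n → ℕ)
    (hsf : ∀ i x, m i x ≤ 1)
    (horder : ∀ i : Fin q, (i : ℕ) ≠ 0 →
      ∃ x : Fin n, m i x = 0 ∧ ∀ j < i, m j x = 1)
    (a b : Fin q → ℕ) (ha : ∑ i, a i = r) (hb : ∑ i, b i = r)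
    (heq : ∀ x : Fin n, ∑ i, a i * m i x = ∑ i, b i * m i x) :
    a = b := by
  have key : ∀ k : ℕ, ∀ i : Fin q, q - (i : ℕ) ≤ k → a i = b i := by
    intro k
    induction k with
    | zero => intro i hi; exact absurd hi (by omega)
    | succ k ih =>
      intro i hi
      have hIoi : ∀ j ∈ Ioi i, a j = b j := by
        intro j hj
        simp only [mem_Ioi] at hj
        exact ih j (by simp only [Fin.lt_def] at hj; omega)
      have htail : ∑ j ∈ Ioi i, a j = ∑ j ∈ Ioi i, b j :=
        Finset.sum_congr rfl hIoi
      have hsa := mysplit i a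
      have hsb := mysplit i b
      by_cases h0 : (i : ℕ) = 0
      · -- Iio i is empty
        have hIio : (Iio i) = (∅ : Finset (Fin q)) := by
          ext j; simp [Fin.lt_def, h0]
        rw [hIio] at hsa hsb
        simp only [Finset.sum_empty, zero_add] at hsa hsb
        omega
      · obtain ⟨x, hx0, hx1⟩ := horder i h0
        have hex := heq x
        rw [mysplit i (fun j => a j * m j x), mysplit i (fun j => b j * m j x)] at hex
        have e1 : ∑ j ∈ Iio i, a j * m j x = ∑ j ∈ Iio i, a j := by
          refine Finset.sum_congr rfl fun j hj => ?_
          rw [hx1 j (mem_Iio.mp hj), mul_one]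
        have e2 : ∑ j ∈ Iio i, b j * m j x = ∑ j ∈ Iio i, b j := by
          refine Finset.sum_congr rfl fun j hj => ?_
          rw [hx1 j (mem_Iio.mp hj), mul_one]
        have e3 : ∑ j ∈ Ioi i, a j * m j x = ∑ j ∈ Ioi i, b j * m j x :=
          Finset.sum_congr rfl fun j hj => by rw [hIoi j hj]
        rw [e1, e2, e3, hx0, mul_zero, mul_zero] at hex
        have hhead : ∑ j ∈ Iio i, a j = ∑ j ∈ Iio i, b j := by omega
        omega
  funext i
  exact key q i (by omega)
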